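/- arXiv:2206.03976 — 2 statements merged into one kernel-verified Lean document; each statement's English description precedes it below -/
import Mathlib

section
/- With qₙ = 2πn/L, c ≠ 0, β_t(s,t) = Σ_{n=1}^N [aₙ sin(qₙ(s+ct)) + bₙ cos(qₙ(s+ct))] and β_s(s,t) = (1/c) Σ_{n=1}^N [aₙ(sin(qₙ(s+ct)) − sin(qₙ s)) + bₙ(cos(qₙ(s+ct)) − cos(qₙ s))], the double integral satisfies (−a/L)∫₀^T∫₀^L β_t β_s ds dt = (−a/c)[ T·Σₙ (aₙ²+bₙ²)/2 − Σₙ (aₙ²+bₙ²) sin(qₙ cT)/(2 qₙ c) ]. -/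
open Real intervalIntegral Finset


lemma int_cos_lin (r φ a b : ℝ) (hr : r ≠ 0) :
    ∫ s in a..b, cos (r*s+φ) = (sin (r*b+φ) - sin (r*a+φ))/r := by
  rw [intervalIntegral.integral_comp_mul_add Real.cos hr φ, integral_cos, smul_eq_mul]
  field_simp

lemma int_cos_per (L : ℝ) (hL : 0 < L) (k : ℤ) (hk : (k:ℝ) ≠ 0) (φ : ℝ) :
    ∫ s in (0:ℝ)..L, cos ((2*π*(k:ℝ)/L)*s+φ) = 0 := by
  have hr : (2*π*(k:ℝ)/L) ≠ 0 :=
    div_ne_zero (mul_ne_zero (mul_ne_zero two_ne_zero pi_ne_zero) hk) hL.ne'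
  rw [int_cos_lin _ _ _ _ hr]
  have h1 : (2*π*(k:ℝ)/L)*L + φ = 2*π*k + φ := by field_simp
  have h2 : sin (2*π*(k:ℝ) + φ) = sin φ := by
    simpa [add_comm, mul_comm, mul_assoc] using Real.sin_add_int_mul_two_pi φ k
  simp [h1, h2]

lemma cc_ortho (L : ℝ) (hL : 0 < L) (n m : ℕ) (hn : n ≠ 0) (φ ψ : ℝ) :
    ∫ s in (0:ℝ)..L, cos ((2*π*n/L)*s+φ) * cos ((2*π*m/L)*s+ψ)
      = if n = m then L/2 * cos (φ - ψ) else 0 := by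
  have mulid : ∀ X Y : ℝ, cos X * cos Y = (cos (X+Y) + cos (X-Y))/2 := by
    intro X Y; rw [cos_add, cos_sub]; ring
  have key : ∀ s : ℝ, cos ((2*π*n/L)*s+φ) * cos ((2*π*m/L)*s+ψ)
      = (cos ((2*π*(((n:ℤ)+m : ℤ):ℝ)/L)*s+(φ+ψ)) + cos ((2*π*(((n:ℤ)-m : ℤ):ℝ)/L)*s+(φ-ψ)))/2 := by
    intro s
    have e1 : (2*π*(((n:ℤ)+m : ℤ):ℝ)/L)*s+(φ+ψ) = ((2*π*n/L)*s+φ) + ((2*π*m/L)*s+ψ) := by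
      push_cast; ring
    have e2 : (2*π*(((n:ℤ)-m : ℤ):ℝ)/L)*s+(φ-ψ) = ((2*π*n/L)*s+φ) - ((2*π*m/L)*s+ψ) := by
      push_cast; ring
    rw [mulid, ← e1, ← e2]
  simp only [key]
  have hi1 : IntervalIntegrable (fun s : ℝ => cos ((2*π*(((n:ℤ)+m : ℤ):ℝ)/L)*s+(φ+ψ)))
      MeasureTheory.volume 0 L := (by fun_prop : Continuous _).intervalIntegrable _ _
  have hi2 : IntervalIntegrable (fun s : ℝ => cos ((2*π*(((n:ℤ)-m : ℤ):ℝ)/L)*s+(φ-ψ)))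
      MeasureTheory.volume 0 L := (by fun_prop : Continuous _).intervalIntegrable _ _
  rw [intervalIntegral.integral_div, intervalIntegral.integral_add hi1 hi2]
  have hnm : (((n:ℤ)+m : ℤ):ℝ) ≠ 0 := by
    have h0 : (0:ℤ) < (n:ℤ)+m := by positivity
    exact_mod_cast h0.ne'
  rw [int_cos_per L hL _ hnm]
  by_cases h : n = m
  · subst h
    have hz : ((n:ℤ) - n : ℤ) = 0 := sub_self _
    rw [hz, if_pos rfl]
    simp only [Int.cast_zero, mul_zero, zero_mul, zero_div, zero_add]
    rw [intervalIntegral.integral_const]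
    simp [smul_eq_mul]
    ring
  · rw [int_cos_per L hL _ (Int.cast_ne_zero.mpr (sub_ne_zero.mpr (by exact_mod_cast h))), if_neg h]
    simp


lemma pair_ortho (L : ℝ) (hL : 0 < L) (n m : ℕ) (hn : n ≠ 0) (α β γ δ θ η : ℝ) :
    ∫ s in (0:ℝ)..L, (α*sin ((2*π*n/L)*s+θ) + β*cos ((2*π*n/L)*s+θ))
      * (γ*sin ((2*π*m/L)*s+η) + δ*cos ((2*π*m/L)*s+η))
      = if n = m then L/2 * ((α*γ+β*δ)*cos (θ-η) + (α*δ-β*γ)*sin (θ-η)) else 0 := by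
  have sc : ∀ (p x ζ : ℝ), sin (p*x+ζ) = cos (p*x+(ζ-π/2)) := by
    intro p x ζ
    rw [show p*x+(ζ-π/2) = (p*x+ζ) - π/2 by ring, Real.cos_sub_pi_div_two]
  have key : ∀ s : ℝ, (α*sin ((2*π*n/L)*s+θ) + β*cos ((2*π*n/L)*s+θ))
      * (γ*sin ((2*π*m/L)*s+η) + δ*cos ((2*π*m/L)*s+η))
      = α*γ*(cos ((2*π*n/L)*s+(θ-π/2)) * cos ((2*π*m/L)*s+(η-π/2)))
      + α*δ*(cos ((2*π*n/L)*s+(θ-π/2)) * cos ((2*π*m/L)*s+η))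
      + β*γ*(cos ((2*π*n/L)*s+θ) * cos ((2*π*m/L)*s+(η-π/2)))
      + β*δ*(cos ((2*π*n/L)*s+θ) * cos ((2*π*m/L)*s+η)) := by
    intro s; rw [sc, sc]; ring
  simp only [key]
  rw [intervalIntegral.integral_add (by apply Continuous.intervalIntegrable; fun_prop)
        (by apply Continuous.intervalIntegrable; fun_prop),
      intervalIntegral.integral_add (by apply Continuous.intervalIntegrable; fun_prop)
        (by apply Continuous.intervalIntegrable; fun_prop),
      intervalIntegral.integral_add (by apply Continuous.intervalIntegrable; fun_prop)
        (by apply Continuous.intervalIntegrable; fun_prop),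
      intervalIntegral.integral_const_mul, intervalIntegral.integral_const_mul,
      intervalIntegral.integral_const_mul, intervalIntegral.integral_const_mul,
      cc_ortho L hL n m hn, cc_ortho L hL n m hn, cc_ortho L hL n m hn, cc_ortho L hL n m hn]
  by_cases h : n = m
  · rw [if_pos h, if_pos h, if_pos h, if_pos h, if_pos h]
    have c1 : (θ-π/2)-(η-π/2) = θ-η := by ring
    have c2 : cos ((θ-π/2)-η) = sin (θ-η) := by
      rw [show (θ-π/2)-η = (θ-η)-π/2 by ring, Real.cos_sub_pi_div_two]
    have c3 : cos (θ-(η-π/2)) = -sin (θ-η) := by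
      rw [show θ-(η-π/2) = (θ-η)+π/2 by ring, Real.cos_add_pi_div_two]
    rw [c1, c2, c3]; ring
  · simp [h]

lemma term_ortho (L : ℝ) (hL : 0 < L) (n m : ℕ) (hn : n ≠ 0) (An Bn Am Bm θn θm : ℝ) :
    ∫ s in (0:ℝ)..L, (An*sin ((2*π*n/L)*s+θn) + Bn*cos ((2*π*n/L)*s+θn))
      * (Am*(sin ((2*π*m/L)*s+θm) - sin ((2*π*m/L)*s)) + Bm*(cos ((2*π*m/L)*s+θm) - cos ((2*π*m/L)*s)))
      = if n = m then L/2 * ((An*Am+Bn*Bm)*(cos (θn-θm) - cos θn)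
          + (An*Bm-Bn*Am)*(sin (θn-θm) - sin θn)) else 0 := by
  have key : ∀ s : ℝ, (An*sin ((2*π*n/L)*s+θn) + Bn*cos ((2*π*n/L)*s+θn))
      * (Am*(sin ((2*π*m/L)*s+θm) - sin ((2*π*m/L)*s)) + Bm*(cos ((2*π*m/L)*s+θm) - cos ((2*π*m/L)*s)))
      = (An*sin ((2*π*n/L)*s+θn) + Bn*cos ((2*π*n/L)*s+θn))
          * (Am*sin ((2*π*m/L)*s+θm) + Bm*cos ((2*π*m/L)*s+θm))
        - (An*sin ((2*π*n/L)*s+θn) + Bn*cos ((2*π*n/L)*s+θn))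
          * (Am*sin ((2*π*m/L)*s+(0:ℝ)) + Bm*cos ((2*π*m/L)*s+(0:ℝ))) := by
    intro s; rw [add_zero ((2*π*m/L)*s)]; ring
  simp only [key]
  rw [intervalIntegral.integral_sub (by apply Continuous.intervalIntegrable; fun_prop)
        (by apply Continuous.intervalIntegrable; fun_prop),
      pair_ortho L hL n m hn, pair_ortho L hL n m hn]
  by_cases h : n = m
  · rw [if_pos h, if_pos h, if_pos h]; simp; ring
  · simp [h]

/-- Center-of-mass displacement double integral for the optimal Fourier gait:
`(-a/L)∫₀^T∫₀^L β_t β_s ds dt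
  = (-a/c)[T Σₙ (aₙ²+bₙ²)/2 - Σₙ (aₙ²+bₙ²) sin(qₙcT)/(2qₙc)]`. -/
theorem com_displacement_fourier
    (L T a c : ℝ) (hL : 0 < L) (hT : 0 < T) (hc : c ≠ 0)
    (N : ℕ) (A B : ℕ → ℝ)
    (q : ℕ → ℝ) (hq : ∀ n, q n = 2 * π * n / L)
    (βt βs : ℝ → ℝ → ℝ)
    (hβt : ∀ s t : ℝ, βt s t =
      ∑ n ∈ Finset.Icc 1 N,
        (A n * Real.sin (q n * (s + c * t)) + B n * Real.cos (q n * (s + c * t))))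
    (hβs : ∀ s t : ℝ, βs s t = (1 / c) *
      ∑ n ∈ Finset.Icc 1 N,
        (A n * (Real.sin (q n * (s + c * t)) - Real.sin (q n * s)) +
         B n * (Real.cos (q n * (s + c * t)) - Real.cos (q n * s)))) :
    (-a / L) * ∫ t in (0 : ℝ)..T, ∫ s in (0 : ℝ)..L, βt s t * βs s t =
      (-a / c) *
        (T * ∑ n ∈ Finset.Icc 1 N, (A n ^ 2 + B n ^ 2) / 2 -
         ∑ n ∈ Finset.Icc 1 N,
           (A n ^ 2 + B n ^ 2) * Real.sin (q n * c * T) / (2 * q n * c)) := by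
  have hqval : ∀ n : ℕ, n ≠ 0 → q n ≠ 0 := by
    intro n hn
    rw [hq]
    have : (0:ℝ) < 2*π*n/L := by
      have : (0:ℝ) < (n:ℝ) := by exact_mod_cast Nat.pos_of_ne_zero hn
      positivity
    exact this.ne'
  -- pointwise representation of the integrand
  have rep : ∀ t s : ℝ, βt s t * βs s t = (1/c) *
      ∑ n ∈ Finset.Icc 1 N, ∑ m ∈ Finset.Icc 1 N,
        ((A n*sin ((2*π*n/L)*s+(q n*c*t)) + B n*cos ((2*π*n/L)*s+(q n*c*t)))
          * (A m*(sin ((2*π*m/L)*s+(q m*c*t)) - sin ((2*π*m/L)*s))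
            + B m*(cos ((2*π*m/L)*s+(q m*c*t)) - cos ((2*π*m/L)*s)))) := by
    intro t s
    rw [hβt, hβs]
    have harg : ∀ n : ℕ, q n * (s + c * t) = (2*π*n/L)*s + (q n*c*t) := by
      intro n; rw [hq]; ring
    have harg2 : ∀ n : ℕ, q n * s = (2*π*n/L)*s := by
      intro n; rw [hq]
    simp only [harg, harg2]
    rw [mul_left_comm, Finset.sum_mul_sum]
  -- inner integral
  have inner : ∀ t : ℝ, (∫ s in (0:ℝ)..L, βt s t * βs s t)
      = (1/c) * ∑ n ∈ Finset.Icc 1 N, L/2*((A n^2+B n^2)*(1 - cos (q n*c*t))) := by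
    intro t
    rw [intervalIntegral.integral_congr (g := fun s => (1/c) *
      ∑ n ∈ Finset.Icc 1 N, ∑ m ∈ Finset.Icc 1 N,
        ((A n*sin ((2*π*n/L)*s+(q n*c*t)) + B n*cos ((2*π*n/L)*s+(q n*c*t)))
          * (A m*(sin ((2*π*m/L)*s+(q m*c*t)) - sin ((2*π*m/L)*s))
            + B m*(cos ((2*π*m/L)*s+(q m*c*t)) - cos ((2*π*m/L)*s)))))
      (fun s _ => rep t s)]
    rw [intervalIntegral.integral_const_mul]
    rw [intervalIntegral.integral_finset_sum (fun n _ => by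
      apply Continuous.intervalIntegrable
      apply continuous_finset_sum
      intro m _
      fun_prop)]
    congr 1
    apply Finset.sum_congr rfl
    intro n hn
    have hn0 : n ≠ 0 := by
      have := (Finset.mem_Icc.mp hn).1; omega
    rw [intervalIntegral.integral_finset_sum (fun m _ => by
      apply Continuous.intervalIntegrable; fun_prop)]
    have step : ∀ m ∈ Finset.Icc 1 N,
        (∫ s in (0:ℝ)..L, ((A n*sin ((2*π*n/L)*s+(q n*c*t)) + B n*cos ((2*π*n/L)*s+(q n*c*t)))
          * (A m*(sin ((2*π*m/L)*s+(q m*c*t)) - sin ((2*π*m/L)*s))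
            + B m*(cos ((2*π*m/L)*s+(q m*c*t)) - cos ((2*π*m/L)*s)))))
        = if n = m then L/2 * ((A n*A m+B n*B m)*(cos (q n*c*t - q m*c*t) - cos (q n*c*t))
            + (A n*B m-B n*A m)*(sin (q n*c*t - q m*c*t) - sin (q n*c*t))) else 0 :=
      fun m _ => term_ortho L hL n m hn0 (A n) (B n) (A m) (B m) (q n*c*t) (q m*c*t)
    rw [Finset.sum_congr rfl step, Finset.sum_ite_eq (Finset.Icc 1 N) n _, if_pos hn]
    rw [sub_self, Real.cos_zero, Real.sin_zero]
    ring
  rw [intervalIntegral.integral_congr (g := fun t => (1/c) *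
      ∑ n ∈ Finset.Icc 1 N, L/2*((A n^2+B n^2)*(1 - cos (q n*c*t))))
    (fun t _ => inner t)]
  rw [intervalIntegral.integral_const_mul]
  rw [intervalIntegral.integral_finset_sum (fun n _ => by
    apply Continuous.intervalIntegrable
    have : Continuous fun t : ℝ => cos (q n * c * t) := by fun_prop
    fun_prop)]
  have outer : ∀ n ∈ Finset.Icc 1 N,
      (∫ t in (0:ℝ)..T, L/2*((A n^2+B n^2)*(1 - cos (q n*c*t))))
      = L/2*((A n^2+B n^2)*(T - sin (q n*c*T)/(q n*c))) := by
    intro n hn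
    have hn0 : n ≠ 0 := by have := (Finset.mem_Icc.mp hn).1; omega
    have hr : q n * c ≠ 0 := mul_ne_zero (hqval n hn0) hc
    rw [intervalIntegral.integral_const_mul, intervalIntegral.integral_const_mul,
      intervalIntegral.integral_sub intervalIntegrable_const
        (by apply Continuous.intervalIntegrable; fun_prop)]
    have hcos : (∫ t in (0:ℝ)..T, cos (q n * c * t)) = sin (q n * c * T)/(q n * c) := by
      have := int_cos_lin (q n * c) 0 0 T hr
      simpa using this
    rw [hcos]
    simp
  rw [Finset.sum_congr rfl outer]
  rw [Finset.mul_sum (Finset.Icc 1 N) (fun n => (A n^2+B n^2)/2) T, ← Finset.sum_sub_distrib,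
    Finset.mul_sum, Finset.mul_sum, Finset.mul_sum]
  apply Finset.sum_congr rfl
  intro n hn
  have hn0 : n ≠ 0 := by have := (Finset.mem_Icc.mp hn).1; omega
  have hqn := hqval n hn0
  field_simp
end

section
/- Let Γ_s(s,t) = γ Σ_{n=1}^N [aₙ sin(qₙ(s+ct)) + bₙ cos(qₙ(s+ct))] − (kqₙ/c)-weighted derivative terms, and β_t as in the Fourier solution. Then the total work done ∫₀^T∫₀^L Γ_s(s,t) β_t(s,t) ds dt equals 2LγT Δ₂ + (2L³γ²kα²/a²)(Δ₂ − Σ_{n=1}^N cos(2nπTa/(L²γα)) (aₙ²+bₙ²)/4), where Δ₂ = (1/4)Σₙ(aₙ²+bₙ²) and c = a/(Lγα). -/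
open Real intervalIntegral Finset

lemma twd_int_cos (L : ℝ) (hL : L ≠ 0) (j : ℤ) (θ : ℝ) :
    ∫ s in (0:ℝ)..L, Real.cos (2*π*j/L * s + θ) = if j = 0 then L * Real.cos θ else 0 := by
  by_cases hj : j = 0
  · simp [hj]
  · have hw : (2*π*j/L : ℝ) ≠ 0 := by
      have : (j : ℝ) ≠ 0 := Int.cast_ne_zero.mpr hj
      have := Real.pi_ne_zero
      exact div_ne_zero (mul_ne_zero (mul_ne_zero two_ne_zero Real.pi_ne_zero) (Int.cast_ne_zero.mpr hj)) hL
    rw [if_neg hj, intervalIntegral.integral_comp_mul_add Real.cos hw θ, integral_cos]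
    have h1 : 2*π*j/L * L + θ = θ + j * (2*π) := by field_simp; ring
    rw [mul_zero, zero_add, h1, Real.sin_add_int_mul_two_pi]
    simp

lemma twd_int_sin (L : ℝ) (hL : L ≠ 0) (j : ℤ) (θ : ℝ) :
    ∫ s in (0:ℝ)..L, Real.sin (2*π*j/L * s + θ) = if j = 0 then L * Real.sin θ else 0 := by
  by_cases hj : j = 0
  · simp [hj]
  · have hw : (2*π*j/L : ℝ) ≠ 0 := by
      have : (j : ℝ) ≠ 0 := Int.cast_ne_zero.mpr hj
      have := Real.pi_ne_zero
      exact div_ne_zero (mul_ne_zero (mul_ne_zero two_ne_zero Real.pi_ne_zero) (Int.cast_ne_zero.mpr hj)) hL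
    rw [if_neg hj, intervalIntegral.integral_comp_mul_add Real.sin hw θ, integral_sin]
    have h1 : 2*π*j/L * L + θ = θ + j * (2*π) := by field_simp; ring
    rw [mul_zero, zero_add, h1, Real.cos_add_int_mul_two_pi]
    simp


lemma twd_orth_ss (L : ℝ) (hL : L ≠ 0) (n m : ℕ) (hn : 1 ≤ n) (hm : 1 ≤ m) (φ ψ : ℝ) :
    ∫ s in (0:ℝ)..L, Real.sin (2*π*n/L * s + φ) * Real.sin (2*π*m/L * s + ψ)
      = if n = m then L/2 * Real.cos (φ - ψ) else 0 := by
  have hpt : ∀ s : ℝ, Real.sin (2*π*n/L * s + φ) * Real.sin (2*π*m/L * s + ψ)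
      = (Real.cos (2*π*((((n:ℤ)-(m:ℤ)):ℤ):ℝ)/L * s + (φ - ψ)) - Real.cos (2*π*((((n:ℤ)+(m:ℤ)):ℤ):ℝ)/L * s + (φ + ψ))) / 2 := by
    intro s
    have e1 : (2*π*((((n:ℤ)-(m:ℤ)):ℤ):ℝ)/L * s + (φ - ψ) : ℝ) = (2*π*n/L * s + φ) - (2*π*m/L * s + ψ) := by
      push_cast; field_simp; ring
    have e2 : (2*π*((((n:ℤ)+(m:ℤ)):ℤ):ℝ)/L * s + (φ + ψ) : ℝ) = (2*π*n/L * s + φ) + (2*π*m/L * s + ψ) := by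
      push_cast; field_simp; ring
    rw [e1, e2]; simp only [Real.cos_sub, Real.cos_add, Real.sin_add, Real.sin_sub]; ring
  rw [intervalIntegral.integral_congr (g := fun s => (Real.cos (2*π*((((n:ℤ)-(m:ℤ)):ℤ):ℝ)/L * s + (φ - ψ)) - Real.cos (2*π*((((n:ℤ)+(m:ℤ)):ℤ):ℝ)/L * s + (φ + ψ))) / 2) (fun s _ => hpt s)]
  rw [intervalIntegral.integral_div, intervalIntegral.integral_sub
    ((Continuous.intervalIntegrable (by fun_prop) _ _))
    ((Continuous.intervalIntegrable (by fun_prop) _ _)),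
    twd_int_cos L hL _ _, twd_int_cos L hL _ _]
  have h2 : ((n:ℤ) + m) ≠ 0 := by positivity
  rw [if_neg h2]
  by_cases h : n = m
  · subst h; simp; ring
  · rw [if_neg (by omega), if_neg h]; ring

lemma twd_orth_sc (L : ℝ) (hL : L ≠ 0) (n m : ℕ) (hn : 1 ≤ n) (hm : 1 ≤ m) (φ ψ : ℝ) :
    ∫ s in (0:ℝ)..L, Real.sin (2*π*n/L * s + φ) * Real.cos (2*π*m/L * s + ψ)
      = if n = m then L/2 * Real.sin (φ - ψ) else 0 := by
  have hpt : ∀ s : ℝ, Real.sin (2*π*n/L * s + φ) * Real.cos (2*π*m/L * s + ψ)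
      = (Real.sin (2*π*((((n:ℤ)+(m:ℤ)):ℤ):ℝ)/L * s + (φ + ψ)) + Real.sin (2*π*((((n:ℤ)-(m:ℤ)):ℤ):ℝ)/L * s + (φ - ψ))) / 2 := by
    intro s
    have e1 : (2*π*((((n:ℤ)-(m:ℤ)):ℤ):ℝ)/L * s + (φ - ψ) : ℝ) = (2*π*n/L * s + φ) - (2*π*m/L * s + ψ) := by
      push_cast; field_simp; ring
    have e2 : (2*π*((((n:ℤ)+(m:ℤ)):ℤ):ℝ)/L * s + (φ + ψ) : ℝ) = (2*π*n/L * s + φ) + (2*π*m/L * s + ψ) := by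
      push_cast; field_simp; ring
    rw [e1, e2]; simp only [Real.cos_sub, Real.cos_add, Real.sin_add, Real.sin_sub]; ring
  rw [intervalIntegral.integral_congr (g := fun s => (Real.sin (2*π*((((n:ℤ)+(m:ℤ)):ℤ):ℝ)/L * s + (φ + ψ)) + Real.sin (2*π*((((n:ℤ)-(m:ℤ)):ℤ):ℝ)/L * s + (φ - ψ))) / 2) (fun s _ => hpt s)]
  rw [intervalIntegral.integral_div, intervalIntegral.integral_add
    ((Continuous.intervalIntegrable (by fun_prop) _ _))
    ((Continuous.intervalIntegrable (by fun_prop) _ _)),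
    twd_int_sin L hL _ _, twd_int_sin L hL _ _]
  have h2 : ((n:ℤ) + m) ≠ 0 := by positivity
  rw [if_neg h2]
  by_cases h : n = m
  · subst h; simp; ring
  · rw [if_neg (by omega), if_neg h]; ring

lemma twd_orth_cc (L : ℝ) (hL : L ≠ 0) (n m : ℕ) (hn : 1 ≤ n) (hm : 1 ≤ m) (φ ψ : ℝ) :
    ∫ s in (0:ℝ)..L, Real.cos (2*π*n/L * s + φ) * Real.cos (2*π*m/L * s + ψ)
      = if n = m then L/2 * Real.cos (φ - ψ) else 0 := by
  have hpt : ∀ s : ℝ, Real.cos (2*π*n/L * s + φ) * Real.cos (2*π*m/L * s + ψ)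
      = (Real.cos (2*π*((((n:ℤ)-(m:ℤ)):ℤ):ℝ)/L * s + (φ - ψ)) + Real.cos (2*π*((((n:ℤ)+(m:ℤ)):ℤ):ℝ)/L * s + (φ + ψ))) / 2 := by
    intro s
    have e1 : (2*π*((((n:ℤ)-(m:ℤ)):ℤ):ℝ)/L * s + (φ - ψ) : ℝ) = (2*π*n/L * s + φ) - (2*π*m/L * s + ψ) := by
      push_cast; field_simp; ring
    have e2 : (2*π*((((n:ℤ)+(m:ℤ)):ℤ):ℝ)/L * s + (φ + ψ) : ℝ) = (2*π*n/L * s + φ) + (2*π*m/L * s + ψ) := by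
      push_cast; field_simp; ring
    rw [e1, e2]; simp only [Real.cos_sub, Real.cos_add, Real.sin_add, Real.sin_sub]; ring
  rw [intervalIntegral.integral_congr (g := fun s => (Real.cos (2*π*((((n:ℤ)-(m:ℤ)):ℤ):ℝ)/L * s + (φ - ψ)) + Real.cos (2*π*((((n:ℤ)+(m:ℤ)):ℤ):ℝ)/L * s + (φ + ψ))) / 2) (fun s _ => hpt s)]
  rw [intervalIntegral.integral_div, intervalIntegral.integral_add
    ((Continuous.intervalIntegrable (by fun_prop) _ _))
    ((Continuous.intervalIntegrable (by fun_prop) _ _)),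
    twd_int_cos L hL _ _, twd_int_cos L hL _ _]
  have h2 : ((n:ℤ) + m) ≠ 0 := by positivity
  rw [if_neg h2]
  by_cases h : n = m
  · subst h; simp; ring
  · rw [if_neg (by omega), if_neg h]; ring


lemma twd_orth_sB (L : ℝ) (hL : L ≠ 0) (n m : ℕ) (hn : 1 ≤ n) (hm : 1 ≤ m) (φ ψ r₁ r₂ : ℝ) :
    ∫ s in (0:ℝ)..L, Real.sin (2*π*n/L * s + φ) *
        (r₁ * Real.sin (2*π*m/L * s + ψ) + r₂ * Real.cos (2*π*m/L * s + ψ))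
      = if n = m then L/2 * (r₁ * Real.cos (φ - ψ) + r₂ * Real.sin (φ - ψ)) else 0 := by
  have hpt : ∀ s ∈ Set.uIcc (0:ℝ) L, Real.sin (2*π*n/L * s + φ) *
        (r₁ * Real.sin (2*π*m/L * s + ψ) + r₂ * Real.cos (2*π*m/L * s + ψ))
      = r₁ * (Real.sin (2*π*n/L * s + φ) * Real.sin (2*π*m/L * s + ψ))
        + r₂ * (Real.sin (2*π*n/L * s + φ) * Real.cos (2*π*m/L * s + ψ)) := by
    intro s _; ring
  rw [intervalIntegral.integral_congr hpt, intervalIntegral.integral_add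
    ((Continuous.intervalIntegrable (by fun_prop) _ _))
    ((Continuous.intervalIntegrable (by fun_prop) _ _)),
    intervalIntegral.integral_const_mul, intervalIntegral.integral_const_mul,
    twd_orth_ss L hL n m hn hm, twd_orth_sc L hL n m hn hm]
  by_cases h : n = m
  · simp [h]; ring
  · simp [h]

lemma twd_orth_cB (L : ℝ) (hL : L ≠ 0) (n m : ℕ) (hn : 1 ≤ n) (hm : 1 ≤ m) (φ ψ r₁ r₂ : ℝ) :
    ∫ s in (0:ℝ)..L, Real.cos (2*π*n/L * s + φ) *
        (r₁ * Real.sin (2*π*m/L * s + ψ) + r₂ * Real.cos (2*π*m/L * s + ψ))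
      = if n = m then L/2 * (-(r₁ * Real.sin (φ - ψ)) + r₂ * Real.cos (φ - ψ)) else 0 := by
  have hpt : ∀ s ∈ Set.uIcc (0:ℝ) L, Real.cos (2*π*n/L * s + φ) *
        (r₁ * Real.sin (2*π*m/L * s + ψ) + r₂ * Real.cos (2*π*m/L * s + ψ))
      = r₁ * (Real.sin (2*π*m/L * s + ψ) * Real.cos (2*π*n/L * s + φ))
        + r₂ * (Real.cos (2*π*n/L * s + φ) * Real.cos (2*π*m/L * s + ψ)) := by
    intro s _; ring
  rw [intervalIntegral.integral_congr hpt, intervalIntegral.integral_add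
    ((Continuous.intervalIntegrable (by fun_prop) _ _))
    ((Continuous.intervalIntegrable (by fun_prop) _ _)),
    intervalIntegral.integral_const_mul, intervalIntegral.integral_const_mul,
    twd_orth_sc L hL m n hm hn, twd_orth_cc L hL n m hn hm]
  by_cases h : n = m
  · subst h
    rw [if_pos rfl, if_pos rfl, if_pos rfl, show (ψ - φ) = -(φ - ψ) by ring, Real.sin_neg]
    ring
  · simp [h, Ne.symm h]

lemma twd_combo (L : ℝ) (hL : L ≠ 0) (n m : ℕ) (hn : 1 ≤ n) (hm : 1 ≤ m)
    (φ ψ p₁ p₂ p₃ p₄ r₁ r₂ : ℝ) :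
    ∫ s in (0:ℝ)..L,
        (p₁ * Real.sin (2*π*n/L * s + φ) + p₂ * Real.cos (2*π*n/L * s + φ)
          + p₃ * Real.sin (2*π*n/L * s) + p₄ * Real.cos (2*π*n/L * s)) *
        (r₁ * Real.sin (2*π*m/L * s + ψ) + r₂ * Real.cos (2*π*m/L * s + ψ))
      = if n = m then
          L/2 * (p₁ * (r₁ * Real.cos (φ - ψ) + r₂ * Real.sin (φ - ψ))
            + p₂ * (-(r₁ * Real.sin (φ - ψ)) + r₂ * Real.cos (φ - ψ))
            + p₃ * (r₁ * Real.cos ψ - r₂ * Real.sin ψ)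
            + p₄ * (r₁ * Real.sin ψ + r₂ * Real.cos ψ))
        else 0 := by
  have hpt : ∀ s ∈ Set.uIcc (0:ℝ) L,
      (p₁ * Real.sin (2*π*n/L * s + φ) + p₂ * Real.cos (2*π*n/L * s + φ)
          + p₃ * Real.sin (2*π*n/L * s) + p₄ * Real.cos (2*π*n/L * s)) *
        (r₁ * Real.sin (2*π*m/L * s + ψ) + r₂ * Real.cos (2*π*m/L * s + ψ))
      = p₁ * (Real.sin (2*π*n/L * s + φ) *
            (r₁ * Real.sin (2*π*m/L * s + ψ) + r₂ * Real.cos (2*π*m/L * s + ψ)))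
        + p₂ * (Real.cos (2*π*n/L * s + φ) *
            (r₁ * Real.sin (2*π*m/L * s + ψ) + r₂ * Real.cos (2*π*m/L * s + ψ)))
        + p₃ * (Real.sin (2*π*n/L * s + 0) *
            (r₁ * Real.sin (2*π*m/L * s + ψ) + r₂ * Real.cos (2*π*m/L * s + ψ)))
        + p₄ * (Real.cos (2*π*n/L * s + 0) *
            (r₁ * Real.sin (2*π*m/L * s + ψ) + r₂ * Real.cos (2*π*m/L * s + ψ))) := by
    intro s _; rw [add_zero]; ring
  rw [intervalIntegral.integral_congr hpt]
  rw [intervalIntegral.integral_add (((Continuous.intervalIntegrable (by fun_prop) _ _)).add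
        ((Continuous.intervalIntegrable (by fun_prop) _ _)) |>.add
        ((Continuous.intervalIntegrable (by fun_prop) _ _)))
      ((Continuous.intervalIntegrable (by fun_prop) _ _)),
    intervalIntegral.integral_add (((Continuous.intervalIntegrable (by fun_prop) _ _)).add
        ((Continuous.intervalIntegrable (by fun_prop) _ _)))
      ((Continuous.intervalIntegrable (by fun_prop) _ _)),
    intervalIntegral.integral_add ((Continuous.intervalIntegrable (by fun_prop) _ _))
      ((Continuous.intervalIntegrable (by fun_prop) _ _))]
  simp only [intervalIntegral.integral_const_mul]
  rw [twd_orth_sB L hL n m hn hm, twd_orth_cB L hL n m hn hm,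
    twd_orth_sB L hL n m hn hm, twd_orth_cB L hL n m hn hm]
  by_cases h : n = m
  · simp only [if_pos h, zero_sub, Real.sin_neg, Real.cos_neg]
    ring
  · simp [h]
/-- Total work done by the optimal active stress over one motion of duration `T`:
`∫₀^T∫₀^L Γ_s β_t ds dt = 2LγTΔ₂ + (2L³γ²kα²/a²)(Δ₂ - Σₙ cos(2nπTa/(L²γα))(aₙ²+bₙ²)/4)`
with `Δ₂ = (1/4)Σₙ(aₙ²+bₙ²)` and `c = a/(Lγα)`. -/
theorem total_work_done
    (γ k L T a α c : ℝ) (hγ : 0 < γ) (hk : 0 < k) (hL : 0 < L) (hT : 0 < T)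
    (ha : a ≠ 0) (hα : α ≠ 0) (hc : c = a / (L * γ * α))
    (N : ℕ) (A B : ℕ → ℝ)
    (q : ℕ → ℝ) (hq : ∀ n, q n = 2 * π * n / L)
    (Δ₂ : ℝ) (hΔ₂ : Δ₂ = (1 / 4) * ∑ n ∈ Finset.Icc 1 N, (A n ^ 2 + B n ^ 2))
    (βt Γ : ℝ → ℝ → ℝ)
    (hβt : ∀ s t : ℝ, βt s t =
      ∑ n ∈ Finset.Icc 1 N,
        (A n * Real.sin (q n * (s + c * t)) + B n * Real.cos (q n * (s + c * t))))
    (hΓ : ∀ s t : ℝ, Γ s t =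
      γ * ∑ n ∈ Finset.Icc 1 N,
        (A n * (Real.cos (q n * (c * t)) - Real.cos (q n * (s + c * t))) / q n +
         B n * (Real.sin (q n * (s + c * t)) - Real.sin (q n * (c * t))) / q n) -
      (k / c) * ∑ n ∈ Finset.Icc 1 N,
        (A n * (Real.sin (q n * (s + c * t)) - Real.sin (q n * s)) +
         B n * (Real.cos (q n * (s + c * t)) - Real.cos (q n * s)))) :
    (∫ t in (0 : ℝ)..T, ∫ s in (0 : ℝ)..L, deriv (fun x => Γ x t) s * βt s t) =
      2 * L * γ * T * Δ₂ +
      (2 * L ^ 3 * γ ^ 2 * k * α ^ 2 / a ^ 2) *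
        (Δ₂ - ∑ n ∈ Finset.Icc 1 N,
          Real.cos (2 * n * π * T * a / (L ^ 2 * γ * α)) * (A n ^ 2 + B n ^ 2) / 4) := by
  have hc0 : c ≠ 0 := by
    rw [hc]
    exact div_ne_zero ha (mul_ne_zero (mul_ne_zero hL.ne' hγ.ne') hα)
  have hqn : ∀ n ∈ Finset.Icc 1 N, q n ≠ 0 := by
    intro n hn
    rw [Finset.mem_Icc] at hn
    rw [hq n]
    have hnpos : (0:ℝ) < (n:ℝ) := by exact_mod_cast hn.1
    positivity
  -- Step 1 : the spatial derivative of `Γ`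
  have hderiv : ∀ t s : ℝ, deriv (fun x => Γ x t) s =
      ∑ n ∈ Finset.Icc 1 N,
        ((γ * A n + k / c * q n * B n) * Real.sin (2*π*n/L * s + q n * (c * t))
          + (γ * B n - k / c * q n * A n) * Real.cos (2*π*n/L * s + q n * (c * t))
          + (-(k / c * q n * B n)) * Real.sin (2*π*n/L * s)
          + (k / c * q n * A n) * Real.cos (2*π*n/L * s)) := by
    intro t s
    have hfun : (fun x => Γ x t) = fun x =>
        γ * ∑ n ∈ Finset.Icc 1 N,
          (A n * (Real.cos (q n * (c * t)) - Real.cos (q n * (x + c * t))) / q n +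
           B n * (Real.sin (q n * (x + c * t)) - Real.sin (q n * (c * t))) / q n) -
        (k / c) * ∑ n ∈ Finset.Icc 1 N,
          (A n * (Real.sin (q n * (x + c * t)) - Real.sin (q n * x)) +
           B n * (Real.cos (q n * (x + c * t)) - Real.cos (q n * x))) :=
      funext fun x => hΓ x t
    rw [hfun]
    have hu : ∀ n : ℕ, HasDerivAt (fun x : ℝ => q n * (x + c * t)) (q n) s := by
      intro n
      simpa using ((hasDerivAt_id s).add_const (c * t)).const_mul (q n)
    have hu2 : ∀ n : ℕ, HasDerivAt (fun x : ℝ => q n * x) (q n) s := by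
      intro n
      simpa using (hasDerivAt_id s).const_mul (q n)
    have h1 : HasDerivAt (fun x : ℝ =>
        γ * ∑ n ∈ Finset.Icc 1 N,
          (A n * (Real.cos (q n * (c * t)) - Real.cos (q n * (x + c * t))) / q n +
           B n * (Real.sin (q n * (x + c * t)) - Real.sin (q n * (c * t))) / q n) -
        (k / c) * ∑ n ∈ Finset.Icc 1 N,
          (A n * (Real.sin (q n * (x + c * t)) - Real.sin (q n * x)) +
           B n * (Real.cos (q n * (x + c * t)) - Real.cos (q n * x))))
        (γ * ∑ n ∈ Finset.Icc 1 N,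
          (A n * (-(-Real.sin (q n * (s + c * t)) * q n)) / q n
            + B n * (Real.cos (q n * (s + c * t)) * q n) / q n) -
        (k / c) * ∑ n ∈ Finset.Icc 1 N,
          (A n * (Real.cos (q n * (s + c * t)) * q n - Real.cos (q n * s) * q n)
            + B n * (-Real.sin (q n * (s + c * t)) * q n - -Real.sin (q n * s) * q n))) s := by
      apply HasDerivAt.sub
      · apply HasDerivAt.const_mul
        apply HasDerivAt.fun_sum
        intro n _
        have hcos : HasDerivAt (fun x => Real.cos (q n * (x + c * t)))
            (-Real.sin (q n * (s + c * t)) * q n) s := (Real.hasDerivAt_cos _).comp s (hu n)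
        have hsin : HasDerivAt (fun x => Real.sin (q n * (x + c * t)))
            (Real.cos (q n * (s + c * t)) * q n) s := (Real.hasDerivAt_sin _).comp s (hu n)
        exact (((hcos.const_sub _).const_mul (A n)).div_const (q n)).add
          (((hsin.sub_const _).const_mul (B n)).div_const (q n))
      · apply HasDerivAt.const_mul
        apply HasDerivAt.fun_sum
        intro n _
        have hcos : HasDerivAt (fun x => Real.cos (q n * (x + c * t)))
            (-Real.sin (q n * (s + c * t)) * q n) s := (Real.hasDerivAt_cos _).comp s (hu n)
        have hsin : HasDerivAt (fun x => Real.sin (q n * (x + c * t)))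
            (Real.cos (q n * (s + c * t)) * q n) s := (Real.hasDerivAt_sin _).comp s (hu n)
        have hcos2 : HasDerivAt (fun x => Real.cos (q n * x))
            (-Real.sin (q n * s) * q n) s := (Real.hasDerivAt_cos _).comp s (hu2 n)
        have hsin2 : HasDerivAt (fun x => Real.sin (q n * x))
            (Real.cos (q n * s) * q n) s := (Real.hasDerivAt_sin _).comp s (hu2 n)
        exact ((hsin.sub hsin2).const_mul (A n)).add ((hcos.sub hcos2).const_mul (B n))
    rw [h1.deriv, Finset.mul_sum, Finset.mul_sum, ← Finset.sum_sub_distrib]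
    refine Finset.sum_congr rfl fun n hn => ?_
    have hqn' := hqn n hn
    have e1 : q n * (s + c * t) = 2*π*n/L * s + q n * (c * t) := by rw [hq n]; ring
    have e2 : q n * s = 2*π*n/L * s := by rw [hq n]
    rw [e1, e2]
    field_simp
    ring
  -- `βt` in normalized form
  have hβ' : ∀ s t : ℝ, βt s t =
      ∑ m ∈ Finset.Icc 1 N,
        (A m * Real.sin (2*π*m/L * s + q m * (c * t))
          + B m * Real.cos (2*π*m/L * s + q m * (c * t))) := by
    intro s t
    rw [hβt s t]
    exact Finset.sum_congr rfl fun m _ => by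
      rw [show q m * (s + c * t) = 2*π*m/L * s + q m * (c * t) by rw [hq m]; ring]
  -- Step 2 : the inner (spatial) integral
  have hinner : ∀ t : ℝ,
      (∫ s in (0:ℝ)..L, deriv (fun x => Γ x t) s * βt s t)
      = ∑ n ∈ Finset.Icc 1 N,
          (L/2 * (γ * (A n ^ 2 + B n ^ 2))
            + L/2 * (k / c * q n * (A n ^ 2 + B n ^ 2)) * Real.sin (q n * (c * t))) := by
    intro t
    have hpt : ∀ s ∈ Set.uIcc (0:ℝ) L,
        deriv (fun x => Γ x t) s * βt s t
        = ∑ n ∈ Finset.Icc 1 N, ∑ m ∈ Finset.Icc 1 N,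
            ((γ * A n + k / c * q n * B n) * Real.sin (2*π*n/L * s + q n * (c * t))
              + (γ * B n - k / c * q n * A n) * Real.cos (2*π*n/L * s + q n * (c * t))
              + (-(k / c * q n * B n)) * Real.sin (2*π*n/L * s)
              + (k / c * q n * A n) * Real.cos (2*π*n/L * s)) *
            (A m * Real.sin (2*π*m/L * s + q m * (c * t))
              + B m * Real.cos (2*π*m/L * s + q m * (c * t))) := by
      intro s _
      rw [hderiv t s, hβ' s t, Finset.sum_mul]
      exact Finset.sum_congr rfl fun n _ => Finset.mul_sum _ _ _
    rw [intervalIntegral.integral_congr hpt,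
      intervalIntegral.integral_finset_sum
        (fun n _ => (Continuous.intervalIntegrable (by fun_prop) _ _))]
    refine Finset.sum_congr rfl fun n hn => ?_
    rw [intervalIntegral.integral_finset_sum
        (fun m _ => (Continuous.intervalIntegrable (by fun_prop) _ _))]
    rw [Finset.mem_Icc] at hn
    have key : ∀ m ∈ Finset.Icc 1 N,
        (∫ s in (0:ℝ)..L,
          ((γ * A n + k / c * q n * B n) * Real.sin (2*π*n/L * s + q n * (c * t))
            + (γ * B n - k / c * q n * A n) * Real.cos (2*π*n/L * s + q n * (c * t))
            + (-(k / c * q n * B n)) * Real.sin (2*π*n/L * s)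
            + (k / c * q n * A n) * Real.cos (2*π*n/L * s)) *
          (A m * Real.sin (2*π*m/L * s + q m * (c * t))
            + B m * Real.cos (2*π*m/L * s + q m * (c * t))))
        = if n = m then
            L/2 * ((γ * A n + k / c * q n * B n) * (A m * Real.cos (q n * (c * t) - q m * (c * t)) + B m * Real.sin (q n * (c * t) - q m * (c * t)))
              + (γ * B n - k / c * q n * A n) * (-(A m * Real.sin (q n * (c * t) - q m * (c * t))) + B m * Real.cos (q n * (c * t) - q m * (c * t)))
              + (-(k / c * q n * B n)) * (A m * Real.cos (q m * (c * t)) - B m * Real.sin (q m * (c * t)))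
              + (k / c * q n * A n) * (A m * Real.sin (q m * (c * t)) + B m * Real.cos (q m * (c * t))))
          else 0 := by
      intro m hm
      rw [Finset.mem_Icc] at hm
      exact twd_combo L hL.ne' n m hn.1 hm.1 _ _ _ _ _ _ _ _
    rw [Finset.sum_congr rfl key, Finset.sum_ite_eq (Finset.Icc 1 N) n,
      if_pos (Finset.mem_Icc.mpr hn)]
    rw [sub_self, Real.cos_zero, Real.sin_zero]
    ring
  -- Step 3 : the outer (time) integral
  rw [intervalIntegral.integral_congr (fun t _ => hinner t)]
  rw [intervalIntegral.integral_finset_sum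
      (fun n _ => (Continuous.intervalIntegrable (by fun_prop) _ _))]
  have key : ∀ n ∈ Finset.Icc 1 N,
      (∫ t in (0:ℝ)..T,
          (L/2 * (γ * (A n ^ 2 + B n ^ 2))
            + L/2 * (k / c * q n * (A n ^ 2 + B n ^ 2)) * Real.sin (q n * (c * t))))
      = 2 * L * γ * T * ((1/4) * (A n ^ 2 + B n ^ 2))
        + (2 * L ^ 3 * γ ^ 2 * k * α ^ 2 / a ^ 2) *
          ((1/4) * (A n ^ 2 + B n ^ 2)
            - Real.cos (2 * n * π * T * a / (L ^ 2 * γ * α)) * (A n ^ 2 + B n ^ 2) / 4) := by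
    intro n hn
    have hqn' := hqn n hn
    have hw : q n * c ≠ 0 := mul_ne_zero hqn' hc0
    rw [intervalIntegral.integral_add
        ((Continuous.intervalIntegrable (by fun_prop) _ _))
        ((Continuous.intervalIntegrable (by fun_prop) _ _)),
      intervalIntegral.integral_const, intervalIntegral.integral_const_mul]
    have harg : (fun t : ℝ => Real.sin (q n * (c * t))) = fun t => Real.sin (q n * c * t) :=
      funext fun t => congrArg Real.sin (by ring)
    rw [harg, intervalIntegral.integral_comp_mul_left Real.sin hw, integral_sin,
      mul_zero, Real.cos_zero]
    rw [show q n * c * T = 2 * n * π * T * a / (L ^ 2 * γ * α) by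
      rw [hq n, hc]; field_simp]
    rw [smul_eq_mul, smul_eq_mul, sub_zero, hc]
    field_simp
    ring
  rw [Finset.sum_congr rfl key, Finset.sum_add_distrib]
  congr 1
  · rw [← Finset.mul_sum, ← Finset.mul_sum, hΔ₂]
  · rw [← Finset.mul_sum, Finset.sum_sub_distrib, ← Finset.mul_sum, hΔ₂]
end
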